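/- Let D be a digraph without 2-cycles, let S^0 be the set of extremal vertices of D, and let D_b be the base digraph of D. If S is a geodetic set of D, then the set S' = (S ∩ V(D_b)) ∪ S^0 is also a geodetic set of D. -/

import Mathlib

namespace GeoPaper

variable {V : Type*}

/-- A directed walk from `u` to `v` in the digraph with arc relation `D`,
represented by the list of its vertices. -/
def IsWalk (D : V → V → Prop) (u v : V) (p : List V) : Prop :=
  p.Chain' D ∧ p.head? = some u ∧ p.getLast? = some v

/-- `interval D u v` is the set of vertices lying on some shortest directed
path from `u` to `v` (i.e. a directed walk of minimum length from `u` to `v`). -/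
def interval (D : V → V → Prop) (u v : V) : Set V :=
  {x | ∃ p, IsWalk D u v p ∧ (∀ q, IsWalk D u v q → p.length ≤ q.length) ∧ x ∈ p}

/-- `S` is a geodetic set of the digraph `D`: every vertex lies on a shortest
directed path between two vertices of `S`. -/
def IsGeodetic (D : V → V → Prop) (S : Set V) : Prop :=
  ∀ x, ∃ u ∈ S, ∃ v ∈ S, x ∈ interval D u v

/-- `S` is a geodetic set of minimum cardinality. -/
def IsMinGeodetic (D : V → V → Prop) (S : Set V) : Prop :=
  IsGeodetic D S ∧ ∀ T : Set V, IsGeodetic D T → S.ncard ≤ T.ncard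

/-- a source: no incoming arcs. -/
def IsSource (D : V → V → Prop) (v : V) : Prop := ∀ u, ¬ D u v

/-- a sink: no outgoing arcs. -/
def IsSink (D : V → V → Prop) (v : V) : Prop := ∀ u, ¬ D v u

/-- an extremal vertex: a source or a sink. -/
def Extremal (D : V → V → Prop) (v : V) : Prop := IsSource D v ∨ IsSink D v

/-- the digraph `D` has no directed 2-cycle (an oriented graph). -/
def NoTwoCycle (D : V → V → Prop) : Prop := ∀ u v, D u v → ¬ D v u

/-- the underlying undirected simple graph of a digraph. -/
def underlying (D : V → V → Prop) : SimpleGraph V where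
  Adj u v := u ≠ v ∧ (D u v ∨ D v u)
  symm := by constructor; intro u v h; exact ⟨h.1.symm, h.2.symm⟩
  loopless := by constructor; intro v h; exact h.1 rfl

/-- a leaf: a vertex of degree 1 in the underlying undirected graph. -/
def IsLeaf (D : V → V → Prop) (v : V) : Prop := ((underlying D).neighborSet v).ncard = 1

/-- a ditree: a digraph whose underlying undirected graph is a tree. -/
def IsDitree (D : V → V → Prop) : Prop := (∀ v, ¬ D v v) ∧ (underlying D).IsTree

/-- reachability by directed paths. -/
def Reach (D : V → V → Prop) : V → V → Prop := Relation.ReflTransGen D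

/-- `S` is a maximal strongly connected component of `D`. -/
def IsSCC (D : V → V → Prop) (S : Set V) : Prop :=
  S.Nonempty ∧ (∀ u ∈ S, ∀ v ∈ S, Reach D u v) ∧
    ∀ T : Set V, S ⊆ T → (∀ u ∈ T, ∀ v ∈ T, Reach D u v) → T ⊆ S

/-- a source set: a maximal strongly connected component no arc enters from outside. -/
def IsSourceSet (D : V → V → Prop) (S : Set V) : Prop :=
  IsSCC D S ∧ ∀ u v, v ∈ S → D u v → u ∈ S

/-- a sink set: a maximal strongly connected component no arc leaves. -/
def IsSinkSet (D : V → V → Prop) (S : Set V) : Prop :=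
  IsSCC D S ∧ ∀ u v, u ∈ S → D u v → v ∈ S

/-- a transitive vertex. -/
def IsTransitiveVertex (D : V → V → Prop) (v : V) : Prop :=
  ∀ u1 u2, D u1 v → D v u2 → D u1 u2 ∨ u1 = u2




variable {V : Type*}

/-- degree of `v` inside the vertex subset `W` of the graph `G`. -/
noncomputable def degIn (G : SimpleGraph V) (W : Set V) (v : V) : ℕ := {u | u ∈ W ∧ G.Adj v u}.ncard

/-- one round of pruning: delete all vertices of degree exactly 1. -/
def pruneStep (G : SimpleGraph V) (W : Set V) : Set V := {v | v ∈ W ∧ degIn G W v ≠ 1}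

/-- the vertex set of the base graph of `G`, obtained by iteratively deleting
degree-1 vertices until none remain. -/
def baseSet (G : SimpleGraph V) : Set V := ⋂ k, (pruneStep G)^[k] Set.univ

/-- a core vertex: a vertex of degree at least 3 in the base graph. -/
def IsCoreVertex (G : SimpleGraph V) (v : V) : Prop :=
  v ∈ baseSet G ∧ 3 ≤ degIn G (baseSet G) v

/-- the inner vertices of a path represented as a list of its vertices. -/
def innerList (p : List V) : List V := (p.drop 1).dropLast

/-- a core path of the base graph of `G`: a path between two core vertices all
of whose internal vertices have degree 2 in the base graph (the two endpoints
may coincide, in which case the core path is a core cycle). -/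
def IsCorePath (G : SimpleGraph V) (p : List V) : Prop :=
  ∃ a q b, p = a :: (q ++ [b]) ∧
    p.Chain' G.Adj ∧
    (∀ v ∈ p, v ∈ baseSet G) ∧
    IsCoreVertex G a ∧ IsCoreVertex G b ∧
    q.Nodup ∧ (∀ v ∈ q, v ≠ a ∧ v ≠ b ∧ degIn G (baseSet G) v = 2) ∧
    (a = b → 4 ≤ p.length) ∧ (a ≠ b → p.Nodup)

/-- the feedback edge set number: the minimum number of edges whose deletion
yields a forest. -/
noncomputable def fen (G : SimpleGraph V) : ℕ :=
  sInf {k | ∃ F : Set (Sym2 V), F ⊆ G.edgeSet ∧ F.ncard = k ∧ (G.deleteEdges F).IsAcyclic}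

/-- the feedback vertex set number: the minimum number of vertices whose
deletion yields a forest. -/
noncomputable def fvn (G : SimpleGraph V) : ℕ :=
  sInf {k | ∃ W : Set V, W.ncard = k ∧ (G.induce Wᶜ).IsAcyclic}




section SolAux

variable {V : Type*} {D : V → V → Prop} {u v s x a b c : V}

lemma isWalk_nonempty {p : List V} (h : IsWalk D u v p) : p ≠ [] := by
  rintro rfl; simp [IsWalk] at h

lemma isWalk_cons {p : List V} (h : IsWalk D u v p) : ∃ t, p = u :: t := by
  obtain ⟨hc, hh, hl⟩ := h
  cases p with
  | nil => simp at hh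
  | cons a t => simp at hh; exact ⟨t, by rw [hh]⟩

lemma isWalk_singleton (u : V) : IsWalk D u u [u] := by simp [IsWalk]; exact List.isChain_singleton u

lemma walk_last_mem {p : List V} (h : IsWalk D u v p) : v ∈ p :=
  List.mem_of_mem_getLast? (by simp [h.2.2])

lemma walk_head_mem {p : List V} (h : IsWalk D u v p) : u ∈ p := by
  obtain ⟨t, rfl⟩ := isWalk_cons h; simp

lemma walk_reach : ∀ (p : List V) (u v : V), IsWalk D u v p → Relation.ReflTransGen D u v := by
  intro p
  induction p with
  | nil => intro u v h; exact absurd rfl (isWalk_nonempty h)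
  | cons a t ih =>
    intro u v h
    obtain ⟨hc, hh, hl⟩ := h
    simp only [List.head?_cons, Option.some.injEq] at hh
    subst hh
    cases t with
    | nil =>
      simp only [List.getLast?_singleton, Option.some.injEq] at hl
      subst hl; exact .refl
    | cons b t' =>
      have hc' := List.isChain_cons_cons.mp hc
      exact .head hc'.1 (ih b v ⟨hc'.2, rfl, by simpa using hl⟩)

lemma reach_walk (h : Relation.ReflTransGen D u v) : ∃ p, IsWalk D u v p := by
  induction h with
  | refl => exact ⟨[u], isWalk_singleton u⟩
  | @tail b c h1 h2 ih =>
    obtain ⟨p, hp⟩ := ih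
    refine ⟨p ++ [c], ?_, ?_, ?_⟩
    · refine List.isChain_append.mpr ⟨hp.1, List.isChain_singleton c, ?_⟩
      intro y hy z hz
      simp only [List.head?_cons, Option.mem_def, Option.some.injEq] at hz
      rw [hp.2.2] at hy
      simp only [Option.mem_def, Option.some.injEq] at hy
      subst hy; subst hz; exact h2
    · rw [List.head?_append_of_ne_nil _ (isWalk_nonempty hp), hp.2.1]
    · simp

lemma walk_split {p : List V} (h : IsWalk D a c p) (hu : u ∈ p) :
    ∃ q1 q2, p = q1 ++ u :: q2 ∧ IsWalk D a u (q1 ++ [u]) ∧ IsWalk D u c (u :: q2) := by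
  obtain ⟨q1, q2, rfl⟩ := List.append_of_mem hu
  obtain ⟨hc, hh, hl⟩ := h
  obtain ⟨hc1, hc2, hlink⟩ := List.isChain_append.mp hc
  have hlast : (u :: q2).getLast? = some c := by
    obtain ⟨g, hg⟩ : ∃ g, (u :: q2).getLast? = some g := by
      cases hgl : (u :: q2).getLast? with
      | none => exact absurd (List.getLast?_eq_none_iff.mp hgl) (List.cons_ne_nil u q2)
      | some g => exact ⟨g, rfl⟩
    rw [List.getLast?_append_of_ne_nil _ (List.cons_ne_nil u q2)] at hl
    exact hl
  refine ⟨q1, q2, rfl, ⟨?_, ?_, by simp⟩, hc2, rfl, hlast⟩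
  · refine List.isChain_append.mpr ⟨hc1, List.isChain_singleton u, ?_⟩
    intro y hy z hz
    simp only [List.head?_cons, Option.mem_def, Option.some.injEq] at hz
    subst hz
    exact hlink y hy u (by simp)
  · cases q1 with
    | nil => simpa using hh
    | cons a' t' => simpa using hh

lemma walk_glue {p q : List V} (h1 : IsWalk D a b p) (h2 : IsWalk D b c q) :
    IsWalk D a c (p ++ q.tail) := by
  obtain ⟨t, rfl⟩ := isWalk_cons h2
  obtain ⟨hc1, hh1, hl1⟩ := h1
  obtain ⟨hc2, hh2, hl2⟩ := h2
  have hc2' := List.isChain_cons.mp hc2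
  refine ⟨?_, ?_, ?_⟩
  · refine List.isChain_append.mpr ⟨hc1, hc2'.2, ?_⟩
    intro y hy z hz
    rw [hl1] at hy
    simp only [Option.mem_def, Option.some.injEq] at hy
    subst hy
    exact hc2'.1 z hz
  · rw [List.head?_append_of_ne_nil _ (by rintro rfl; simp at hh1), hh1]
  · cases t with
    | nil =>
      simp only [List.getLast?_singleton, Option.some.injEq] at hl2
      subst hl2; simpa using hl1
    | cons b' t' =>
      simp only [List.tail_cons]
      rw [List.getLast?_append_of_ne_nil _ (List.cons_ne_nil b' t')]
      simpa using hl2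

lemma exists_min_walk (h : ∃ p, IsWalk D a b p) :
    ∃ p, IsWalk D a b p ∧ ∀ q, IsWalk D a b q → p.length ≤ q.length := by
  have hne : {n | ∃ p, IsWalk D a b p ∧ p.length = n}.Nonempty := by
    obtain ⟨p, hp⟩ := h; exact ⟨p.length, p, hp, rfl⟩
  obtain ⟨p, hp, hlen⟩ := Nat.sInf_mem hne
  exact ⟨p, hp, fun q hq => hlen ▸ Nat.sInf_le ⟨q, hq, rfl⟩⟩

lemma sep_interval (hw : ∀ q, IsWalk D s v q → u ∈ q) (hr : Relation.ReflTransGen D s u)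
    (hx : x ∈ interval D u v) : x ∈ interval D s v := by
  obtain ⟨p, hp, hpmin, hxp⟩ := hx
  obtain ⟨q0, hq0, hq0min⟩ := exists_min_walk (reach_walk hr)
  refine ⟨q0 ++ p.tail, walk_glue hq0 hp, ?_, ?_⟩
  · intro q hq
    obtain ⟨q1, q2, rfl, hq1, hq2⟩ := walk_split hq (hw q hq)
    have e1 := hq0min _ hq1
    have e2 := hpmin _ hq2
    have e3 : p ≠ [] := isWalk_nonempty hp
    have e4 : 1 ≤ p.length := by
      cases p with
      | nil => exact absurd rfl e3
      | cons _ _ => simp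
    have g1 : (q0 ++ p.tail).length = q0.length + (p.length - 1) := by simp
    have g2 : (q1 ++ u :: q2).length = q1.length + 1 + q2.length := by
      simp [List.length_append]; omega
    have e1' : q0.length ≤ q1.length + 1 := by simpa using e1
    have e2' : p.length ≤ q2.length + 1 := by simpa using e2
    omega
  · obtain ⟨t, rfl⟩ := isWalk_cons hp
    rcases List.mem_cons.mp hxp with rfl | hxt
    · exact List.mem_append_left _ (List.mem_of_mem_getLast? (by simp [hq0.2.2]))
    · exact List.mem_append_right _ (by simpa using hxt)



def Wk (G : SimpleGraph V) (k : ℕ) : Set V := (pruneStep G)^[k] Set.univ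

variable {G : SimpleGraph V} {x y z u v w : V}

lemma wk_succ (G : SimpleGraph V) (k : ℕ) : Wk G (k + 1) = pruneStep G (Wk G k) :=
  Function.iterate_succ_apply' _ _ _

lemma pruneStep_subset (G : SimpleGraph V) (A : Set V) : pruneStep G A ⊆ A := fun _ h => h.1

lemma wk_antitone {j k : ℕ} (h : j ≤ k) : Wk G k ⊆ Wk G j := by
  induction k with
  | zero => simp_all
  | succ n ih =>
    rcases Nat.lt_or_ge j (n + 1) with h' | h'
    · exact (wk_succ G n ▸ pruneStep_subset G (Wk G n)).trans (ih (by omega))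
    · have : j = n + 1 := by omega
      subst this; exact subset_rfl

lemma mem_baseSet_iff : x ∈ baseSet G ↔ ∀ k, x ∈ Wk G k := Set.mem_iInter

noncomputable def ptime (G : SimpleGraph V) (x : V) : ℕ := sInf {k | x ∉ Wk G k}

lemma pruned_exists (hx : x ∉ baseSet G) : ∃ k, x ∉ Wk G k := by
  by_contra h; push_neg at h; exact hx (mem_baseSet_iff.mpr h)

lemma not_mem_wk_ptime (hx : x ∉ baseSet G) : x ∉ Wk G (ptime G x) :=
  Nat.sInf_mem (pruned_exists hx)

lemma mem_wk_of_lt_ptime {j : ℕ} (h : j < ptime G x) : x ∈ Wk G j := by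
  by_contra h'
  have hle : ptime G x ≤ j := Nat.sInf_le h'
  omega

lemma ptime_pos (hx : x ∉ baseSet G) : 1 ≤ ptime G x := by
  rcases Nat.eq_zero_or_pos (ptime G x) with h | h
  · exact absurd (by trivial) (h ▸ not_mem_wk_ptime hx)
  · exact h

lemma lt_ptime_of_mem_wk {j : ℕ} (hx : x ∉ baseSet G) (h : x ∈ Wk G j) : j < ptime G x := by
  by_contra h'
  exact (not_mem_wk_ptime hx) (wk_antitone (by omega) h)

lemma pruned_of_not_mem_wk {j : ℕ} (h : x ∉ Wk G j) : x ∉ baseSet G := fun hb =>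
  h (mem_baseSet_iff.mp hb j)

lemma deg_one (hx : x ∉ baseSet G) : degIn G (Wk G (ptime G x - 1)) x = 1 := by
  have h1 := not_mem_wk_ptime hx
  have h0 := ptime_pos hx
  have h2 : x ∈ Wk G (ptime G x - 1) := mem_wk_of_lt_ptime (by omega)
  have heq : ptime G x = (ptime G x - 1) + 1 := by omega
  rw [heq, wk_succ] at h1
  by_contra hne
  exact h1 ⟨h2, hne⟩

open Classical in
noncomputable def parentV (G : SimpleGraph V) (x : V) : V :=
  if h : ∃ a, {u | u ∈ Wk G (ptime G x - 1) ∧ G.Adj x u} = {a} then h.choose else x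

lemma parentV_set (hx : x ∉ baseSet G) :
    {u | u ∈ Wk G (ptime G x - 1) ∧ G.Adj x u} = {parentV G x} := by
  have h : ∃ a, {u | u ∈ Wk G (ptime G x - 1) ∧ G.Adj x u} = {a} :=
    Set.ncard_eq_one.mp (deg_one hx)
  rw [parentV, dif_pos h]
  exact h.choose_spec

lemma parent_mem (hx : x ∉ baseSet G) : parentV G x ∈ Wk G (ptime G x - 1) := by
  have := parentV_set hx
  have h2 : parentV G x ∈ {u | u ∈ Wk G (ptime G x - 1) ∧ G.Adj x u} := by
    rw [this]; rfl
  exact h2.1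

lemma parent_adj (hx : x ∉ baseSet G) : G.Adj x (parentV G x) := by
  have := parentV_set hx
  have h2 : parentV G x ∈ {u | u ∈ Wk G (ptime G x - 1) ∧ G.Adj x u} := by
    rw [this]; rfl
  exact h2.2

lemma parent_unique (hx : x ∉ baseSet G) (h1 : y ∈ Wk G (ptime G x - 1)) (h2 : G.Adj x y) :
    y = parentV G x := by
  have := parentV_set hx
  have h3 : y ∈ {u | u ∈ Wk G (ptime G x - 1) ∧ G.Adj x u} := ⟨h1, h2⟩
  rw [this] at h3
  exact h3

/-- parent's pruning time is at least the child's (when parent is pruned too). -/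
lemma ptime_parent_ge (hx : x ∉ baseSet G) (hp : parentV G x ∉ baseSet G) :
    ptime G x ≤ ptime G (parentV G x) := by
  have := lt_ptime_of_mem_wk hp (parent_mem hx)
  have := ptime_pos hx
  omega

/-- neighbor classification of a pruned vertex. -/
lemma nbr (hy : y ∉ baseSet G) (hz : G.Adj y z) :
    z = parentV G y ∨ (z ∉ baseSet G ∧ parentV G z = y ∧ ptime G z < ptime G y) := by
  by_cases hzin : z ∈ Wk G (ptime G y - 1)
  · exact Or.inl (parent_unique hy hzin hz)
  · have hzp : z ∉ baseSet G := pruned_of_not_mem_wk hzin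
    have hle : ptime G z ≤ ptime G y - 1 := Nat.sInf_le hzin
    have hy1 := ptime_pos hy
    have hymem : y ∈ Wk G (ptime G z - 1) :=
      wk_antitone (by omega) (mem_wk_of_lt_ptime (show ptime G y - 1 < ptime G y by omega))
    refine Or.inr ⟨hzp, (parent_unique hzp hymem hz.symm).symm, by omega⟩

def StepV (G : SimpleGraph V) (x c : V) : Prop :=
  c ∉ baseSet G ∧ parentV G c = x ∧ ¬ (x ∉ baseSet G ∧ parentV G x = c)

def subtreeV (G : SimpleGraph V) (u : V) : Set V := {y | Relation.ReflTransGen (StepV G) u y}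

lemma subtree_refl (u : V) : u ∈ subtreeV G u := Relation.ReflTransGen.refl

lemma step_ptime (hb : x ∉ baseSet G) (h : StepV G x c) : ptime G c < ptime G x := by
  obtain ⟨hc, hpar, hnm⟩ := h
  have hbm : x ∈ Wk G (ptime G c - 1) := hpar ▸ parent_mem hc
  have hge : ptime G c ≤ ptime G x := by
    have := lt_ptime_of_mem_wk hb hbm
    have := ptime_pos hc
    omega
  rcases Nat.lt_or_ge (ptime G c) (ptime G x) with h' | h'
  · exact h'
  · -- equal times: mutual pair, contradicting hnm
    have heq : ptime G c = ptime G x := by omega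
    have hcm : c ∈ Wk G (ptime G x - 1) := by
      rw [← heq]; exact mem_wk_of_lt_ptime (show ptime G c - 1 < ptime G c by have := ptime_pos hc; omega)
    have hadj : G.Adj x c := (hpar ▸ parent_adj hc).symm
    exact absurd ⟨hb, (parent_unique hb hcm hadj).symm⟩ hnm

lemma subtree_ptime (hu : u ∉ baseSet G) (hy : y ∈ subtreeV G u) :
    y = u ∨ (y ∉ baseSet G ∧ ptime G y < ptime G u) := by
  induction hy with
  | refl => exact Or.inl rfl
  | @tail b c hab hbc ih =>
    rcases ih with rfl | ⟨hbp, hlt⟩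
    · exact Or.inr ⟨hbc.1, step_ptime hu hbc⟩
    · exact Or.inr ⟨hbc.1, (step_ptime hbp hbc).trans hlt⟩

lemma subtree_pruned (hu : u ∉ baseSet G) (hy : y ∈ subtreeV G u) : y ∉ baseSet G := by
  rcases subtree_ptime hu hy with rfl | h
  · exact hu
  · exact h.1

lemma parent_not_mem_subtree (hu : u ∉ baseSet G) : parentV G u ∉ subtreeV G u := by
  intro hmem
  rcases subtree_ptime hu hmem with heq | ⟨hp, hlt⟩
  · exact (parent_adj hu).ne' heq
  · exact absurd (ptime_parent_ge hu hp) (by omega)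

lemma subtree_closure (hu : u ∉ baseSet G) (hy : y ∈ subtreeV G u) (hz : G.Adj y z) :
    z ∈ subtreeV G u ∨ (y = u ∧ z = parentV G u) := by
  have hyp : y ∉ baseSet G := subtree_pruned hu hy
  rcases nbr hyp hz with hzp | ⟨hzp, hpzy, hlt⟩
  · rcases Relation.ReflTransGen.cases_tail hy with heq | ⟨c, hc, hstep⟩
    · exact Or.inr ⟨heq, by rw [heq] at hzp; exact hzp⟩
    · subst hzp
      rw [hstep.2.1]
      exact Or.inl hc
  · -- z is a proper child of y
    have hstep : StepV G y z := by
      refine ⟨hzp, hpzy, ?_⟩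
      rintro ⟨-, hpy⟩
      have : y ∈ Wk G (ptime G z - 1) := hpzy ▸ parent_mem hzp
      have hzm : z ∈ Wk G (ptime G y - 1) := hpy ▸ parent_mem hyp
      have := lt_ptime_of_mem_wk hzp hzm
      have := ptime_pos hyp
      omega
    exact Or.inl (hy.tail hstep)

lemma subtree_comp : ∀ {w v : V}, v ∈ subtreeV G w → ∀ u, v ∈ subtreeV G u →
    w ∈ subtreeV G u ∨ u ∈ subtreeV G w := by
  intro w v h1
  induction h1 with
  | refl => exact fun u h => Or.inl h
  | @tail b c hab hbc ih =>
    intro u h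
    rcases Relation.ReflTransGen.cases_tail h with heq | ⟨d, hd, hstep⟩
    · exact Or.inr (heq ▸ hab.tail hbc)
    · have : d = b := by rw [← hstep.2.1, ← hbc.2.1]
      subst this
      rcases ih u hd with h' | h'
      · exact Or.inl h'
      · exact Or.inr h'




lemma crossing {R : V → V → Prop} (P : V → Prop) :
    ∀ (p : List V), p.Chain' R → ∀ s, p.head? = some s → P s →
      ∀ y ∈ p, ¬ P y → ∃ a b, R a b ∧ P a ∧ ¬ P b ∧ a ∈ p ∧ b ∈ p := by
  intro p
  induction p with
  | nil => simp
  | cons hd tl ih =>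
    intro hch s hs hPs y hy hPy
    simp only [List.head?_cons, Option.some.injEq] at hs
    subst hs
    have hyt : y ∈ tl := by
      rcases List.mem_cons.mp hy with rfl | h'
      · exact absurd hPs hPy
      · exact h'
    cases tl with
    | nil => simp at hyt
    | cons b t' =>
      by_cases hPb : P b
      · obtain ⟨a', b', h1, h2, h3, h4, h5⟩ :=
          ih (List.isChain_cons_cons.mp hch).2 b rfl hPb y hyt hPy
        exact ⟨a', b', h1, h2, h3, List.mem_cons_of_mem _ h4, List.mem_cons_of_mem _ h5⟩
      · exact ⟨hd, b, (List.isChain_cons_cons.mp hch).1, hPs, hPb, by simp, by simp⟩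

variable {D : V → V → Prop} {r s v y u u0 t : V}

lemma adj_of_arc (h2c : NoTwoCycle D) {a b : V} (h : D a b) : (underlying D).Adj a b :=
  ⟨fun he => h2c a b h (he ▸ h), Or.inl h⟩

lemma exit_lemma (h2c : NoTwoCycle D) (hr : r ∉ baseSet (underlying D))
    {q : List V} (hq : IsWalk D s v q) (hs : s ∈ subtreeV (underlying D) r)
    (hy : y ∈ q) (hyo : y ∉ subtreeV (underlying D) r) :
    parentV (underlying D) r ∈ q ∧ D r (parentV (underlying D) r) := by
  obtain ⟨a, b, hab, hPa, hPb, haq, hbq⟩ :=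
    crossing (· ∈ subtreeV (underlying D) r) q hq.1 s hq.2.1 hs y hy hyo
  rcases subtree_closure hr hPa (adj_of_arc h2c hab) with h' | ⟨rfl, rfl⟩
  · exact absurd h' hPb
  · exact ⟨hbq, hab⟩

lemma entry_lemma (h2c : NoTwoCycle D) (hr : r ∉ baseSet (underlying D))
    {q : List V} (hq : IsWalk D s v q) (hs : s ∉ subtreeV (underlying D) r)
    (hy : y ∈ q) (hyi : y ∈ subtreeV (underlying D) r) :
    r ∈ q ∧ D (parentV (underlying D) r) r := by
  obtain ⟨a, b, hab, hPa, hPb, haq, hbq⟩ :=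
    crossing (· ∉ subtreeV (underlying D) r) q hq.1 s hq.2.1 hs y hy (not_not_intro hyi)
  push_neg at hPb
  rcases subtree_closure hr hPb (adj_of_arc h2c hab).symm with h' | ⟨rfl, rfl⟩
  · exact absurd h' hPa
  · exact ⟨hbq, hab⟩

def uSet (G : SimpleGraph V) (u v : V) : Set V :=
  {y | ∃ w, v ∈ subtreeV G w ∧ u ∉ subtreeV G w ∧ y ∈ subtreeV G w}

section Meas

variable [Fintype V] {G : SimpleGraph V} {x u v w u0 t : V}

open Classical in
noncomputable def meas (G : SimpleGraph V) [Fintype V] (u v : V) : ℕ :=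
  (Nat.card V + 1) * (Nat.card V + 1 - (uSet G u v).ncard) +
    (if u ∉ baseSet G then ptime G u else 0)

lemma wk_ssubset (hx : x ∉ baseSet G) {j : ℕ} (hj : j < ptime G x) :
    Wk G (j + 1) ⊂ Wk G j := by
  have hsub : Wk G (j + 1) ⊆ Wk G j := wk_succ G j ▸ pruneStep_subset G (Wk G j)
  rcases hsub.ssubset_or_eq with h | h
  · exact h
  · exfalso
    have hfix : ∀ m, Wk G (j + m) = Wk G j := by
      intro m
      induction m with
      | zero => rfl
      | succ n ihn =>
        have : j + (n + 1) = (j + n) + 1 := by omega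
        rw [this, wk_succ, ihn, ← wk_succ, h]
    have h1 : x ∈ Wk G j := mem_wk_of_lt_ptime hj
    have h2 := not_mem_wk_ptime hx
    have h3 : Wk G (ptime G x) = Wk G j := by
      have he : ptime G x = j + (ptime G x - j) := by omega
      rw [he, hfix]
    exact h2 (h3 ▸ h1)

lemma ncard_wk_add (hx : x ∉ baseSet G) : ∀ j ≤ ptime G x, (Wk G j).ncard + j ≤ Nat.card V := by
  intro j
  induction j with
  | zero =>
    intro _
    simp [show Wk G 0 = (Set.univ : Set V) from rfl, Set.ncard_univ]
  | succ n ihn =>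
    intro h
    have hss := wk_ssubset hx (show n < ptime G x by omega)
    have h1 := Set.ncard_lt_ncard hss (Set.toFinite _)
    have h2 := ihn (by omega)
    omega

lemma ptime_le_card (hx : x ∉ baseSet G) : ptime G x ≤ Nat.card V := by
  have := ncard_wk_add hx (ptime G x) le_rfl
  omega

lemma meas_case_a (hu : u ∉ baseSet G) (ht : t ∉ baseSet G) (hpar : parentV G t = u)
    (hlt : ptime G t < ptime G u) (hvt : v ∉ subtreeV G t) : meas G t v < meas G u v := by
  classical
  have hmono : uSet G u v ⊆ uSet G t v := by
    rintro y ⟨w', h1, h2, h3⟩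
    refine ⟨w', h1, ?_, h3⟩
    intro hmem
    rcases Relation.ReflTransGen.cases_tail hmem with heq | ⟨d, hd, hstep⟩
    · exact hvt (heq ▸ h1)
    · have hdu : d = u := by rw [← hstep.2.1, hpar]
      exact h2 (hdu ▸ hd)
  have hn : (uSet G u v).ncard ≤ (uSet G t v).ncard :=
    Set.ncard_le_ncard hmono (Set.toFinite _)
  have hm : (Nat.card V + 1) * (Nat.card V + 1 - (uSet G t v).ncard) ≤
      (Nat.card V + 1) * (Nat.card V + 1 - (uSet G u v).ncard) :=
    Nat.mul_le_mul_left _ (by omega)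
  simp only [meas, if_pos hu, if_pos ht]
  omega

lemma meas_stuck (hu : u ∉ baseSet G) (hvin : v ∈ subtreeV G u)
    (hu0 : u0 ∉ subtreeV G u) : meas G u0 v < meas G u v := by
  classical
  have h1 : uSet G u v ⊆ subtreeV G u \ {u} := by
    rintro y ⟨w', hv', hu', hy'⟩
    have hw' : w' ∈ subtreeV G u := by
      rcases subtree_comp hv' u hvin with h | h
      · exact h
      · exact absurd h hu'
    refine ⟨hw'.trans hy', ?_⟩
    rintro rfl
    exact hu' hy'
  have h2 : subtreeV G u ⊆ uSet G u0 v := fun y hy => ⟨u, hvin, hu0, hy⟩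
  have hA : (uSet G u v).ncard < (subtreeV G u).ncard := by
    have ha := Set.ncard_le_ncard h1 (Set.toFinite _)
    have hb : (subtreeV G u \ {u}).ncard < (subtreeV G u).ncard :=
      Set.ncard_diff_singleton_lt_of_mem (subtree_refl u) (Set.toFinite _)
    omega
  have hB : (subtreeV G u).ncard ≤ (uSet G u0 v).ncard :=
    Set.ncard_le_ncard h2 (Set.toFinite _)
  have hBC : (uSet G u0 v).ncard ≤ Nat.card V := by
    have := Set.ncard_le_ncard (Set.subset_univ (uSet G u0 v)) (Set.toFinite _)
    rwa [Set.ncard_univ] at this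
  have ht0 : (if u0 ∉ baseSet G then ptime G u0 else 0) ≤ Nat.card V := by
    split
    · exact ptime_le_card (by assumption)
    · omega
  have key : (Nat.card V + 1) * (Nat.card V + 1 - (uSet G u0 v).ncard) + (Nat.card V + 1) ≤
      (Nat.card V + 1) * (Nat.card V + 1 - (uSet G u v).ncard) := by
    have he : (Nat.card V + 1) * (Nat.card V + 1 - (uSet G u0 v).ncard) + (Nat.card V + 1) =
        (Nat.card V + 1) * ((Nat.card V + 1 - (uSet G u0 v).ncard) + 1) := by ring
    rw [he]
    exact Nat.mul_le_mul_left _ (by omega)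
  simp only [meas, if_pos hu]
  omega

end Meas


section MainRec

variable [Fintype V] {D : V → V → Prop} {u v x : V} {S : Set V}

lemma src_aux (h2c : NoTwoCycle D) (S : Set V) (hS : IsGeodetic D S) :
    ∀ n : ℕ, ∀ u v x : V, meas (underlying D) u v < n → u ∉ baseSet (underlying D) →
      x ∈ interval D u v →
      ∃ s, (Extremal D s ∨ s ∈ S ∩ baseSet (underlying D)) ∧ x ∈ interval D s v := by
  intro n
  induction n with
  | zero => intro u v x hm; exact absurd hm (Nat.not_lt_zero _)
  | succ n ih =>
    intro u v x hm hu hx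
    by_cases hsrc : IsSource D u
    · exact ⟨u, Or.inl (Or.inl hsrc), hx⟩
    · have hin : ∃ t, D t u := by
        simp only [IsSource, not_forall, not_not] at hsrc; exact hsrc
      by_cases hA : ∃ t, D t u ∧ t ∉ baseSet (underlying D) ∧ parentV (underlying D) t = u ∧
          ptime (underlying D) t < ptime (underlying D) u
      · obtain ⟨t, hdtu, htp, hpar, hlt⟩ := hA
        have hunt : u ∉ subtreeV (underlying D) t := by
          intro hmem
          rcases subtree_ptime htp hmem with heq | ⟨-, hlt'⟩
          · exact (parent_adj htp).ne' (hpar.trans heq)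
          · omega
        by_cases hvt : v ∈ subtreeV (underlying D) t
        · exfalso
          obtain ⟨p, hp, -, -⟩ := hx
          have := entry_lemma h2c htp hp hunt (walk_last_mem hp) hvt
          exact h2c t u hdtu (hpar ▸ this.2)
        · have hw : ∀ q, IsWalk D t v q → u ∈ q := by
            intro q hq
            have := exit_lemma h2c htp hq (subtree_refl t) (walk_last_mem hq) hvt
            exact hpar ▸ this.1
          have hx' : x ∈ interval D t v :=
            sep_interval hw (Relation.ReflTransGen.single hdtu) hx
          exact ih t v x (by have := meas_case_a hu htp hpar hlt hvt; omega) htp hx'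
      · push_neg at hA
        have hpar_in : ∀ t, D t u → t = parentV (underlying D) u := by
          intro t hdtu
          rcases nbr hu (adj_of_arc h2c hdtu).symm with h' | ⟨h1, h2, h3⟩
          · exact h'
          · have := hA t hdtu h1 h2; omega
        obtain ⟨t0, ht0⟩ := hin
        have hdwu : D (parentV (underlying D) u) u := (hpar_in t0 ht0) ▸ ht0
        have hvin : v ∈ subtreeV (underlying D) u := by
          by_contra hvout
          obtain ⟨p, hp, -, -⟩ := hx
          have := exit_lemma h2c hu hp (subtree_refl u) (walk_last_mem hp) hvout
          exact h2c _ _ hdwu this.2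
        obtain ⟨u0, hu0S, v0, hv0S, hwcov⟩ := hS (parentV (underlying D) u)
        obtain ⟨p0, hp0, -, hwp0⟩ := hwcov
        obtain ⟨q1, q2, -, hq1, -⟩ := walk_split hp0 hwp0
        have hreach : Relation.ReflTransGen D u0 u :=
          (walk_reach _ _ _ hq1).tail hdwu
        have hwout : parentV (underlying D) u ∉ subtreeV (underlying D) u :=
          parent_not_mem_subtree hu
        have hu0out : u0 ∉ subtreeV (underlying D) u := by
          intro hmem
          have := exit_lemma h2c hu hq1 hmem (walk_last_mem hq1) hwout
          exact h2c _ _ hdwu this.2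
        have hww : ∀ q, IsWalk D u0 v q → u ∈ q := by
          intro q hq
          exact (entry_lemma h2c hu hq hu0out (walk_last_mem hq) hvin).1
        have hx0 : x ∈ interval D u0 v := sep_interval hww hreach hx
        by_cases hb : u0 ∈ baseSet (underlying D)
        · exact ⟨u0, Or.inr ⟨hu0S, hb⟩, hx0⟩
        · exact ih u0 v x (by have := meas_stuck hu hvin hu0out; omega) hb hx0

lemma src_full (h2c : NoTwoCycle D) (hS : IsGeodetic D S) (huS : u ∈ S)
    (hx : x ∈ interval D u v) :
    ∃ s, (Extremal D s ∨ s ∈ S ∩ baseSet (underlying D)) ∧ x ∈ interval D s v := by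
  by_cases hb : u ∈ baseSet (underlying D)
  · exact ⟨u, Or.inr ⟨huS, hb⟩, hx⟩
  · exact src_aux h2c S hS (meas (underlying D) u v + 1) u v x (by omega) hb hx

end MainRec

section Flip

variable {D : V → V → Prop} {u v x : V} {S : Set V}

lemma isWalk_flip {p : List V} (h : IsWalk D u v p) : IsWalk (flip D) v u p.reverse := by
  obtain ⟨hc, hh, hl⟩ := h
  refine ⟨List.isChain_reverse.mpr hc, ?_, ?_⟩
  · rw [List.head?_reverse]; exact hl
  · rw [List.getLast?_reverse]; exact hh

lemma interval_flip_subset : interval (flip D) v u ⊆ interval D u v := by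
  rintro x ⟨p, hp, hmin, hxp⟩
  refine ⟨p.reverse, isWalk_flip (D := flip D) hp, ?_, by simpa using hxp⟩
  intro q hq
  have := hmin q.reverse (isWalk_flip hq)
  simpa using this

lemma interval_flip : interval (flip D) v u = interval D u v :=
  subset_antisymm interval_flip_subset
    (fun x hx => interval_flip_subset (D := flip D) (u := v) (v := u) hx)

lemma underlying_flip : underlying (flip D) = underlying D := by
  ext a b
  show (a ≠ b ∧ (flip D a b ∨ flip D b a)) ↔ (a ≠ b ∧ (D a b ∨ D b a))
  exact and_congr_right fun _ => or_comm

lemma extremal_flip {s : V} : Extremal (flip D) s ↔ Extremal D s := by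
  constructor <;> rintro (h | h)
  · exact Or.inr h
  · exact Or.inl h
  · exact Or.inr h
  · exact Or.inl h

lemma noTwoCycle_flip (h2c : NoTwoCycle D) : NoTwoCycle (flip D) :=
  fun u v h hh => h2c v u h hh

lemma geodetic_flip (hS : IsGeodetic D S) : IsGeodetic (flip D) S := by
  intro x
  obtain ⟨u, hu, v, hv, hx⟩ := hS x
  exact ⟨v, hv, u, hu, by rw [interval_flip]; exact hx⟩

end Flip


end SolAux

/-- Let `D` be a digraph without 2-cycles, `S⁰` its set of
extremal vertices and `D_b` its base digraph. If `S` is a geodetic set of `D`,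
then `(S ∩ V(D_b)) ∪ S⁰` is also a geodetic set of `D`. -/
theorem geodetic_restrict_to_base_union_extremal [Fintype V]
    (D : V → V → Prop) (h2c : NoTwoCycle D)
    (S : Set V) (hS : IsGeodetic D S) :
    IsGeodetic D ((S ∩ baseSet (underlying D)) ∪ {v | Extremal D v}) := by
  intro x
  obtain ⟨u, hu, v, hv, hx⟩ := hS x
  have hx' : x ∈ interval (flip D) v u := by rw [interval_flip]; exact hx
  obtain ⟨t, ht, hxt⟩ := src_full (noTwoCycle_flip h2c) (geodetic_flip hS) hv hx'
  have hxt' : x ∈ interval D u t := by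
    rw [← interval_flip (D := D) (u := u) (v := t)]; exact hxt
  obtain ⟨s, hs, hxs⟩ := src_full h2c hS hu hxt'
  refine ⟨s, ?_, t, ?_, hxs⟩
  · rcases hs with h | h
    · exact Or.inr h
    · exact Or.inl h
  · rcases ht with h | h
    · exact Or.inr (extremal_flip.mp h)
    · exact Or.inl (by rwa [underlying_flip] at h)


end GeoPaper
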